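/- Let u be a function continuous near a point a ∈ ℂ with φ = u + (β−1) log|ξ − a| satisfying e^{2φ}|dξ|² = β² |η|^{2β−2}(1+|η|^{2β})^{−2} |dη|² for a holomorphic coordinate η centered at a. Then lim_{ξ→a} |ξ − a| ∂u/∂ξ = 0. -/

import Mathlib

open Filter Topology

/-- The Wirtinger derivative `∂f/∂ξ = (1/2)(∂f/∂x - i ∂f/∂y)`. -/
noncomputable def wirtingerD (f : ℂ → ℂ) (z : ℂ) : ℂ :=
  (1 / 2 : ℂ) * (fderiv ℝ f z 1 - Complex.I * fderiv ℝ f z Complex.I)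

/-- The real-linear map `v ↦ (w * v).re`. -/
noncomputable def reL (w : ℂ) : ℂ →L[ℝ] ℝ :=
  Complex.reCLM.comp ((ContinuousLinearMap.mul ℂ ℂ w).restrictScalars ℝ)

lemma reL_apply (w v : ℂ) : reL w v = (w * v).re := rfl

lemma reL_smul (c : ℝ) (w : ℂ) : reL ((c : ℂ) * w) = c • reL w := by
  ext v; simp [reL_apply, mul_assoc]

lemma wd_eq (g : ℂ → ℝ) (z w : ℂ) (h : HasFDerivAt g (reL w) z) :
    wirtingerD (fun x => (g x : ℂ)) z = w / 2 := by
  have h2 : HasFDerivAt (fun x => (g x : ℂ)) (Complex.ofRealCLM.comp (reL w)) z :=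
    Complex.ofRealCLM.hasFDerivAt.comp z h
  rw [wirtingerD, h2.fderiv]
  simp only [ContinuousLinearMap.coe_comp', Function.comp_apply, reL_apply,
    Complex.ofRealCLM_apply, mul_one]
  apply Complex.ext <;> simp [Complex.div_re, Complex.div_im, Complex.normSq] <;> ring

lemma hasFDerivAt_normSq_comp (h : ℂ → ℂ) (z h' : ℂ) (hd : HasDerivAt h h' z) :
    HasFDerivAt (fun x => Complex.normSq (h x))
      (reL (2 * (starRingEnd ℂ) (h z) * h')) z := by
  have hdr : HasFDerivAt h (((1 : ℂ →L[ℂ] ℂ).smulRight h').restrictScalars ℝ) z :=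
    hd.hasFDerivAt.restrictScalars ℝ
  have hre : HasFDerivAt (fun x => (h x).re)
      (Complex.reCLM.comp (((1 : ℂ →L[ℂ] ℂ).smulRight h').restrictScalars ℝ)) z :=
    Complex.reCLM.hasFDerivAt.comp z hdr
  have him : HasFDerivAt (fun x => (h x).im)
      (Complex.imCLM.comp (((1 : ℂ →L[ℂ] ℂ).smulRight h').restrictScalars ℝ)) z :=
    Complex.imCLM.hasFDerivAt.comp z hdr
  have key := ((hre.mul hre).add (him.mul him))
  have hfun : (fun x => Complex.normSq (h x))
      = fun x => (h x).re * (h x).re + (h x).im * (h x).im := by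
    funext x; simp [Complex.normSq_apply]
  rw [hfun]
  have heq : reL (2 * (starRingEnd ℂ) (h z) * h')
      = ((h z).re • Complex.reCLM.comp (((1 : ℂ →L[ℂ] ℂ).smulRight h').restrictScalars ℝ) +
        (h z).re • Complex.reCLM.comp (((1 : ℂ →L[ℂ] ℂ).smulRight h').restrictScalars ℝ) +
        ((h z).im • Complex.imCLM.comp (((1 : ℂ →L[ℂ] ℂ).smulRight h').restrictScalars ℝ) +
        (h z).im • Complex.imCLM.comp (((1 : ℂ →L[ℂ] ℂ).smulRight h').restrictScalars ℝ))) := by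
    ext v
    simp [reL_apply, Complex.mul_re, Complex.mul_im]
    ring
  rw [heq]
  exact key

lemma hasFDerivAt_logNorm (h : ℂ → ℂ) (z h' : ℂ) (hd : HasDerivAt h h' z)
    (h0 : h z ≠ 0) :
    HasFDerivAt (fun x => Real.log ‖h x‖) (reL (h' / h z)) z := by
  have hq0 : Complex.normSq (h z) ≠ 0 := by
    simpa [Complex.normSq_eq_zero] using h0
  have hlog : HasDerivAt Real.log (Complex.normSq (h z))⁻¹ (Complex.normSq (h z)) :=
    Real.hasDerivAt_log hq0
  have key := hlog.comp_hasFDerivAt z (hasFDerivAt_normSq_comp h z h' hd)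
  have hfun : (fun x => Real.log ‖h x‖)
      = fun x => (1/2 : ℝ) * Real.log (Complex.normSq (h x)) := by
    funext x
    rw [← Complex.sq_norm, Real.log_pow]
    push_cast
    ring
  rw [hfun]
  have key2 := key.const_smul (1/2 : ℝ)
  have heq : reL (h' / h z) = (1/2 : ℝ) •
      ((Complex.normSq (h z))⁻¹ • reL (2 * (starRingEnd ℂ) (h z) * h')) := by
    rw [← reL_smul, ← reL_smul]
    congr 1
    rw [div_eq_mul_inv]
    push_cast
    rw [Complex.inv_def]
    field_simp
    push_cast; ring
  rw [heq]
  exact key2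

lemma alg (b c d e f z S : ℂ) (hz : z ≠ 0) :
    (c * (z / e * d) - 2 * b * S * (z / e * d) / (1 + S) + z * f / d - c) / 2
      = z * ((c * (d / e) - 2 * b * S * d / (e * (1 + S)) + f / d - c * (1 / z)) / 2) := by
  have h1 : z * (1 / z) = 1 := by field_simp
  rw [← div_div]
  linear_combination (c / 2) * h1

lemma norm_rpow_two_mul (β : ℝ) (w : ℂ) : ‖w‖ ^ (2 * β) = Complex.normSq w ^ β := by
  rw [← Complex.sq_norm, ← Real.rpow_natCast ‖w‖ 2,
    ← Real.rpow_mul (norm_nonneg w)]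
  norm_num

lemma hasFDerivAt_logOnePlus (β : ℝ) (h : ℂ → ℂ) (z h' : ℂ)
    (hd : HasDerivAt h h' z) (h0 : h z ≠ 0) :
    HasFDerivAt (fun x => Real.log (1 + ‖h x‖ ^ (2 * β)))
      (reL (2 * (β : ℂ) * (‖h z‖ ^ (2 * β) : ℝ) * h' /
        (h z * (1 + (‖h z‖ ^ (2 * β) : ℝ))))) z := by
  set q : ℝ := Complex.normSq (h z) with hqdef
  have hq0 : 0 < q := by
    simpa [hqdef, Complex.normSq_pos] using h0
  have houter : HasDerivAt (fun t : ℝ => Real.log (1 + t ^ β))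
      (β * q ^ (β - 1) / (1 + q ^ β)) q := by
    have h1 : HasDerivAt (fun t : ℝ => 1 + t ^ β) (β * q ^ (β - 1)) q := by
      have := (Real.hasDerivAt_rpow_const (x := q) (p := β) (Or.inl hq0.ne'))
      simpa [mul_comm] using this.const_add 1
    have h2 : (0:ℝ) < 1 + q ^ β := by positivity
    have := (Real.hasDerivAt_log h2.ne').comp q h1
    simpa [div_eq_inv_mul, Function.comp_def] using this
  have key := houter.comp_hasFDerivAt z (hasFDerivAt_normSq_comp h z h' hd)
  have hfun : (fun x => Real.log (1 + ‖h x‖ ^ (2 * β)))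
      = fun x => Real.log (1 + Complex.normSq (h x) ^ β) := by
    funext x; rw [norm_rpow_two_mul]
  rw [hfun]
  have heq : reL (2 * (β : ℂ) * (‖h z‖ ^ (2 * β) : ℝ) * h' /
        (h z * (1 + (‖h z‖ ^ (2 * β) : ℝ))))
      = (β * q ^ (β - 1) / (1 + q ^ β)) • reL (2 * (starRingEnd ℂ) (h z) * h') := by
    rw [← reL_smul]
    congr 1
    rw [norm_rpow_two_mul]
    have hconj : (starRingEnd ℂ) (h z) = (q : ℂ) / h z := by
      rw [hqdef]
      push_cast [Complex.normSq_eq_conj_mul_self]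
      field_simp
    rw [hconj, Real.rpow_sub hq0, Real.rpow_one]
    have h1s : (1:ℝ) + q ^ β ≠ 0 := by positivity
    have hqC : (q : ℂ) ≠ 0 := by exact_mod_cast hq0.ne'
    have h1sC : (1 : ℂ) + ((q ^ β : ℝ) : ℂ) ≠ 0 := by exact_mod_cast h1s
    push_cast
    field_simp
    rw [← hqdef]; field_simp
  rw [heq]
  exact key

set_option maxHeartbeats 1000000 in
/-- if `u` is continuous near `a`,
`φ = u + (β-1) log|ξ - a|` and `e^{2φ}|dξ|²` is the model spherical cone
metric `β²|η|^{2β-2}(1+|η|^{2β})^{-2}|dη|²` in a holomorphic coordinate `η`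
centered at `a`, then `lim_{ξ→a} (ξ - a) ∂u/∂ξ = 0`. -/
theorem stmt10 (β : ℝ) (hβ : 0 < β ∧ β < 1) (a : ℂ) (u : ℂ → ℝ) (η : ℂ → ℂ)
    (hu_cont : ∀ᶠ ξ in 𝓝 a, ContinuousAt u ξ)
    (hu_diff : ∀ᶠ ξ in 𝓝[≠] a, DifferentiableAt ℝ u ξ)
    (hη_diff : ∀ᶠ ξ in 𝓝 a, DifferentiableAt ℂ η ξ)
    (hη₀ : η a = 0) (hη' : deriv η a ≠ 0)
    (hmetric : ∀ᶠ ξ in 𝓝[≠] a,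
      Real.exp (2 * (u ξ + (β - 1) * Real.log ‖ξ - a‖)) =
        β ^ 2 * ‖η ξ‖ ^ (2 * β - 2) / (1 + ‖η ξ‖ ^ (2 * β)) ^ 2 *
          ‖deriv η ξ‖ ^ 2) :
    Tendsto (fun ξ => (ξ - a) * wirtingerD (fun x => (u x : ℂ)) ξ)
      (𝓝[≠] a) (𝓝 0) := by
  obtain ⟨hβ0, hβ1⟩ := hβ
  -- analyticity of η near a
  obtain ⟨V, hVsub, hVo, haV⟩ := mem_nhds_iff.mp hη_diff
  have hdiffOn : DifferentiableOn ℂ η V := fun x hx =>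
    (show DifferentiableAt ℂ η x from hVsub hx).differentiableWithinAt
  have hana : AnalyticOnNhd ℂ η V := hdiffOn.analyticOnNhd hVo
  have hana' : AnalyticOnNhd ℂ (deriv η) V := hana.deriv
  have hana'' : AnalyticOnNhd ℂ (deriv (deriv η)) V := hana'.deriv
  have hcont' : ContinuousAt (deriv η) a := (hana' a haV).continuousAt
  have hcont'' : ContinuousAt (deriv (deriv η)) a := (hana'' a haV).continuousAt
  -- slope limits
  have hda : HasDerivAt η (deriv η a) a := (hVsub haV).hasDerivAt
  have hslope : Tendsto (fun ξ => η ξ / (ξ - a)) (𝓝[≠] a) (𝓝 (deriv η a)) := by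
    have h1 := hasDerivAt_iff_tendsto_slope.mp hda
    have h2 : slope η a = fun ξ => η ξ / (ξ - a) := by
      funext ξ; simp [slope_def_field, hη₀]
    rwa [h2] at h1
  have hηne : ∀ᶠ ξ in 𝓝[≠] a, η ξ ≠ 0 := by
    filter_upwards [hslope (isOpen_compl_singleton.mem_nhds hη')] with ξ hξ
    intro h0
    exact hξ (by simp [h0])
  have hratio : Tendsto (fun ξ => (ξ - a) / η ξ) (𝓝[≠] a) (𝓝 (deriv η a)⁻¹) := by
    have := hslope.inv₀ hη'
    have h2 : (fun ξ => (η ξ / (ξ - a))⁻¹) = fun ξ => (ξ - a) / η ξ := by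
      funext ξ; rw [inv_div]
    rwa [h2] at this
  have hη'ne : ∀ᶠ ξ in 𝓝 a, deriv η ξ ≠ 0 :=
    hcont' (isOpen_compl_singleton.mem_nhds hη')
  -- the Wirtinger derivative of u
  set s : ℂ → ℝ := fun ξ => ‖η ξ‖ ^ (2 * β) with hsdef
  set w : ℂ → ℂ := fun ξ =>
    (((β - 1 : ℝ) : ℂ) * (deriv η ξ / η ξ)
      - 2 * (β : ℂ) * (s ξ : ℝ) * deriv η ξ / (η ξ * (1 + (s ξ : ℝ)))
      + deriv (deriv η) ξ / deriv η ξ)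
      - ((β - 1 : ℝ) : ℂ) * (1 / (ξ - a)) with hwdef
  have hwd : ∀ᶠ ξ in 𝓝[≠] a, wirtingerD (fun x => (u x : ℂ)) ξ = w ξ / 2 := by
    have hEV : ∀ᶠ ξ in 𝓝[≠] a, (ξ ∈ V ∧ deriv η ξ ≠ 0) ∧ η ξ ≠ 0 ∧
        Real.exp (2 * (u ξ + (β - 1) * Real.log ‖ξ - a‖)) =
          β ^ 2 * ‖η ξ‖ ^ (2 * β - 2) / (1 + ‖η ξ‖ ^ (2 * β)) ^ 2 *
            ‖deriv η ξ‖ ^ 2 := by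
      refine (((hVo.eventually_mem haV).and hη'ne).filter_mono nhdsWithin_le_nhds).and
        (hηne.and hmetric)
    obtain ⟨U, hUo, haU, hUsub⟩ := mem_nhdsWithin.mp hEV
    set F : ℂ → ℝ := fun x => Real.log β +
      (((β - 1) * Real.log ‖η x‖ - Real.log (1 + ‖η x‖ ^ (2 * β))
        + Real.log ‖deriv η x‖) - (β - 1) * Real.log ‖x - a‖) with hFdef
    have huF : ∀ x ∈ U ∩ {a}ᶜ, u x = F x := by
      intro x hx
      obtain ⟨⟨hxV, hx'⟩, hxη, hxm⟩ := hUsub hx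
      have hxa : x ≠ a := hx.2
      have hs0 : 0 < ‖η x‖ := norm_pos_iff.mpr hxη
      have ht0 : 0 < ‖deriv η x‖ := norm_pos_iff.mpr hx'
      have hop : (0:ℝ) < 1 + ‖η x‖ ^ (2 * β) := by positivity
      have hlog := congrArg Real.log hxm
      rw [Real.log_exp, Real.log_mul (by positivity) (by positivity),
        Real.log_div (by positivity) (by positivity),
        Real.log_mul (by positivity) (by positivity),
        Real.log_pow, Real.log_pow, Real.log_pow,
        Real.log_rpow hs0] at hlog
      rw [hFdef]
      push_cast at hlog ⊢
      nlinarith [hlog]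
    refine eventually_of_mem (mem_nhdsWithin.mpr ⟨U, hUo, haU, fun x hx => hx⟩) ?_
    intro ξ hξ
    obtain ⟨⟨hξV, hξ'⟩, hξη, _⟩ := hUsub hξ
    have hξa : ξ ≠ a := hξ.2
    have hdη : HasDerivAt η (deriv η ξ) ξ := (hVsub hξV).hasDerivAt
    have hdη' : HasDerivAt (deriv η) (deriv (deriv η) ξ) ξ :=
      ((hana' ξ hξV).differentiableAt).hasDerivAt
    have h1 := (hasFDerivAt_logNorm η ξ (deriv η ξ) hdη hξη).const_mul (β - 1)
    have h2 := hasFDerivAt_logOnePlus β η ξ (deriv η ξ) hdη hξη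
    have h3 := hasFDerivAt_logNorm (deriv η) ξ (deriv (deriv η) ξ) hdη' hξ'
    have h4 := (hasFDerivAt_logNorm (fun x => x - a) ξ 1
      ((hasDerivAt_id ξ).sub_const a) (sub_ne_zero.mpr hξa)).const_mul (β - 1)
    have key := (((h1.sub h2).add h3).sub h4).const_add (Real.log β)
    have hLeq : reL (w ξ) =
        ((((β - 1) • reL (deriv η ξ / η ξ)
          - reL (2 * (β : ℂ) * (‖η ξ‖ ^ (2 * β) : ℝ) * deriv η ξ /
              (η ξ * (1 + (‖η ξ‖ ^ (2 * β) : ℝ)))))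
          + reL (deriv (deriv η) ξ / deriv η ξ))
          - (β - 1) • reL (1 / (ξ - a))) := by
      ext v
      simp only [hwdef, hsdef, reL_apply, ContinuousLinearMap.add_apply,
        ContinuousLinearMap.sub_apply, ContinuousLinearMap.smul_apply, smul_eq_mul,
        sub_mul, add_mul, Complex.sub_re, Complex.add_re, mul_assoc,
        Complex.re_ofReal_mul]
    have hFd : HasFDerivAt F (reL (w ξ)) ξ := by
      rw [hLeq]; exact key
    have hev : u =ᶠ[𝓝 ξ] F :=
      eventually_of_mem ((hUo.inter isOpen_compl_singleton).mem_nhds hξ) huF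
    exact wd_eq u ξ (w ξ) (hFd.congr_of_eventuallyEq hev)
  -- the limit
  have hsC : Tendsto (fun ξ => ((s ξ : ℝ) : ℂ)) (𝓝[≠] a) (𝓝 0) := by
    have hη_cont : Tendsto (fun ξ => ‖η ξ‖) (𝓝 a) (𝓝 0) := by
      have := ((hVsub haV).continuousAt).norm.tendsto
      simpa [hη₀] using this
    have hs0 : Tendsto s (𝓝 a) (𝓝 0) := by
      have := hη_cont.rpow_const (p := 2 * β) (Or.inr (by positivity))
      simpa [hsdef, Real.zero_rpow (by positivity : (2*β : ℝ) ≠ 0)] using this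
    exact ((Complex.continuous_ofReal.tendsto 0).comp hs0).mono_left nhdsWithin_le_nhds
  have hd'w : Tendsto (deriv η) (𝓝[≠] a) (𝓝 (deriv η a)) :=
    hcont'.tendsto.mono_left nhdsWithin_le_nhds
  have hd''w : Tendsto (deriv (deriv η)) (𝓝[≠] a) (𝓝 (deriv (deriv η) a)) :=
    hcont''.tendsto.mono_left nhdsWithin_le_nhds
  have hsub : Tendsto (fun ξ : ℂ => ξ - a) (𝓝[≠] a) (𝓝 0) := by
    have : Tendsto (fun ξ : ℂ => ξ - a) (𝓝 a) (𝓝 (a - a)) :=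
      (continuous_id.sub continuous_const).tendsto a
    simpa using this.mono_left nhdsWithin_le_nhds
  have hA : Tendsto (fun ξ => (ξ - a) / η ξ * deriv η ξ) (𝓝[≠] a) (𝓝 1) := by
    have := hratio.mul hd'w
    rwa [inv_mul_cancel₀ hη'] at this
  have hB : Tendsto (fun ξ => 2 * (β : ℂ) * (s ξ : ℝ) * ((ξ - a) / η ξ * deriv η ξ) /
      (1 + (s ξ : ℝ))) (𝓝[≠] a) (𝓝 0) := by
    have hnum : Tendsto (fun ξ => 2 * (β : ℂ) * (s ξ : ℝ) * ((ξ - a) / η ξ * deriv η ξ))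
        (𝓝[≠] a) (𝓝 0) := by
      have := ((hsC.const_mul (2 * (β : ℂ))).mul hA)
      simpa using this
    have hden : Tendsto (fun ξ => (1 : ℂ) + (s ξ : ℝ)) (𝓝[≠] a) (𝓝 1) := by
      have := hsC.const_add (1 : ℂ)
      simpa using this
    have := hnum.div hden one_ne_zero
    rw [zero_div] at this; exact this
  have hC : Tendsto (fun ξ => (ξ - a) * deriv (deriv η) ξ / deriv η ξ)
      (𝓝[≠] a) (𝓝 0) := by
    have := (hsub.mul hd''w).div hd'w hη'
    rw [zero_mul, zero_div] at this; exact this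
  have hg : Tendsto (fun ξ =>
      ((((β - 1 : ℝ) : ℂ) * ((ξ - a) / η ξ * deriv η ξ)
        - 2 * (β : ℂ) * (s ξ : ℝ) * ((ξ - a) / η ξ * deriv η ξ) / (1 + (s ξ : ℝ))
        + (ξ - a) * deriv (deriv η) ξ / deriv η ξ)
        - ((β - 1 : ℝ) : ℂ)) / 2) (𝓝[≠] a) (𝓝 0) := by
    have := ((((hA.const_mul ((β - 1 : ℝ) : ℂ)).sub hB).add hC).sub
      (tendsto_const_nhds : Tendsto (fun _ : ℂ => ((β - 1 : ℝ) : ℂ)) (𝓝[≠] a)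
        (𝓝 ((β - 1 : ℝ) : ℂ)))).div_const (2 : ℂ)
    convert this using 2
    ring
  refine hg.congr' ?_
  filter_upwards [hwd, self_mem_nhdsWithin] with ξ h1 h4
  rw [h1]
  simp only [hwdef]
  exact alg (β : ℂ) ((β - 1 : ℝ) : ℂ) (deriv η ξ) (η ξ) (deriv (deriv η) ξ)
    (ξ - a) ((s ξ : ℝ) : ℂ) (sub_ne_zero.mpr h4)
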